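/- Consider the immersion-and-invariance estimator P̂(t) = −(γ/2)C x₂(t)² + P_I(t), with Ṗ_I = γ x₁ x₂ (1−u) + (γ²/2)C x₂² − γ P_I, where x₁, x₂ evolve according to L ẋ₁ = −(1−u)x₂ + uE, C ẋ₂ = (1−u)x₁ − P/x₂. Then the estimation error P̃ := P̂ − P satisfies the linear ODE P̃' = −γ P̃, so P̃(t) = P̃(0)·e^{−γt} and P̂(t) → P exponentially as t → ∞, for any measurable control signal u(t) ∈ [0,1]. -/

import Mathlib

open Real Filter

/-- the I&I estimator `P̂ = −(γ/2)Cx₂² + P_I` with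
`Ṗ_I = γx₁x₂(1−u) + (γ²/2)Cx₂² − γP_I`, along the converter dynamics, yields the
error equation `P̃' = −γP̃`, hence `P̃(t) = P̃(0)e^{−γt}` and `P̂(t) → P`. -/
theorem II_estimator_exponential_convergence
    (L C E P γ : ℝ) (hL : 0 < L) (hC : 0 < C) (hE : 0 < E) (hP : 0 < P)
    (hγ : 0 < γ)
    (x1 x2 PI u : ℝ → ℝ)
    (hu : ∀ t, u t ∈ Set.Icc (0 : ℝ) 1)
    (hx2pos : ∀ t, 0 < x2 t)
    (hx1' : ∀ t, HasDerivAt x1 ((-(1 - u t) * x2 t + u t * E) / L) t)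
    (hx2' : ∀ t, HasDerivAt x2 (((1 - u t) * x1 t - P / x2 t) / C) t)
    (hPI' : ∀ t, HasDerivAt PI
      (γ * x1 t * x2 t * (1 - u t) + γ ^ 2 / 2 * C * (x2 t) ^ 2 - γ * PI t) t) :
    let Phat : ℝ → ℝ := fun t => -(γ / 2) * C * (x2 t) ^ 2 + PI t
    (∀ t : ℝ, HasDerivAt (fun s => Phat s - P) (-γ * (Phat t - P)) t) ∧
    (∀ t : ℝ, 0 ≤ t → Phat t - P = (Phat 0 - P) * Real.exp (-γ * t)) ∧
    Tendsto Phat atTop (nhds P) := by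
  intro Phat
  have hf : ∀ t : ℝ, HasDerivAt (fun s => Phat s - P) (-γ * (Phat t - P)) t := by
    intro t
    have h2 : HasDerivAt (fun s => (x2 s) ^ 2)
        (2 * (x2 t) ^ 1 * (((1 - u t) * x1 t - P / x2 t) / C)) t := (hx2' t).pow 2
    have h3 : HasDerivAt Phat
        (-(γ / 2) * C * (2 * (x2 t) ^ 1 * (((1 - u t) * x1 t - P / x2 t) / C)) +
          (γ * x1 t * x2 t * (1 - u t) + γ ^ 2 / 2 * C * (x2 t) ^ 2 - γ * PI t)) t :=
      ((h2.const_mul (-(γ / 2) * C)).add (hPI' t))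
    have h4 := h3.sub_const P
    refine h4.congr_deriv ?_
    have hx2ne : x2 t ≠ 0 := (hx2pos t).ne'
    simp only [Phat]
    field_simp
    ring
  refine ⟨hf, ?_, ?_⟩
  · have key : ∀ t : ℝ, Phat t - P = (Phat 0 - P) * Real.exp (-γ * t) := by
      have hg : ∀ t : ℝ, HasDerivAt (fun s => (Phat s - P) * Real.exp (γ * s)) 0 t := by
        intro t
        have he : HasDerivAt (fun s : ℝ => Real.exp (γ * s)) (γ * Real.exp (γ * t)) t := by
          have := (Real.hasDerivAt_exp (γ * t)).comp t ((hasDerivAt_id t).const_mul γ)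
          simpa [mul_comm, Function.comp_def] using this
        have := (hf t).mul he
        refine this.congr_deriv ?_
        ring
      have hconst : ∀ t : ℝ, (Phat t - P) * Real.exp (γ * t)
          = (Phat 0 - P) * Real.exp (γ * 0) :=
        fun t => is_const_of_deriv_eq_zero
          (fun s => ((hg s).differentiableAt))
          (fun s => (hg s).deriv) t 0
      intro t
      have h := hconst t
      have hexp : Real.exp (γ * t) ≠ 0 := Real.exp_ne_zero _
      have : Phat t - P = (Phat 0 - P) * Real.exp (γ * 0) / Real.exp (γ * t) := by
        field_simp at h ⊢; linarith [h]
      rw [this]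
      rw [mul_div_assoc, ← Real.exp_sub]
      ring_nf
    exact fun t _ => key t
  · have key : ∀ t : ℝ, Phat t - P = (Phat 0 - P) * Real.exp (-γ * t) := by
      -- re-derive as above
      have hg : ∀ t : ℝ, HasDerivAt (fun s => (Phat s - P) * Real.exp (γ * s)) 0 t := by
        intro t
        have he : HasDerivAt (fun s : ℝ => Real.exp (γ * s)) (γ * Real.exp (γ * t)) t := by
          have := (Real.hasDerivAt_exp (γ * t)).comp t ((hasDerivAt_id t).const_mul γ)
          simpa [mul_comm, Function.comp_def] using this
        have := (hf t).mul he
        refine this.congr_deriv ?_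
        ring
      have hconst : ∀ t : ℝ, (Phat t - P) * Real.exp (γ * t)
          = (Phat 0 - P) * Real.exp (γ * 0) :=
        fun t => is_const_of_deriv_eq_zero
          (fun s => ((hg s).differentiableAt))
          (fun s => (hg s).deriv) t 0
      intro t
      have h := hconst t
      have hexp : Real.exp (γ * t) ≠ 0 := Real.exp_ne_zero _
      have : Phat t - P = (Phat 0 - P) * Real.exp (γ * 0) / Real.exp (γ * t) := by
        field_simp at h ⊢; linarith [h]
      rw [this, mul_div_assoc, ← Real.exp_sub]
      ring_nf
    have hlim : Tendsto (fun t => P + (Phat 0 - P) * Real.exp (-γ * t)) atTop (nhds P) := by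
      have h1 : Tendsto (fun t : ℝ => -γ * t) atTop atBot :=
        tendsto_id.const_mul_atTop_of_neg (neg_neg_iff_pos.mpr hγ)
      have h2 : Tendsto (fun t : ℝ => Real.exp (-γ * t)) atTop (nhds 0) :=
        Real.tendsto_exp_atBot.comp h1
      have := (h2.const_mul (Phat 0 - P)).const_add P
      simpa using this
    refine hlim.congr (fun t => ?_)
    have := key t
    linarith [this]
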